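/- Let F be a field of characteristic zero, K = F(t), c ∈ F nonzero, m ≠ 1 an integer, and δ_{c,m} the derivation on K with δ_{c,m}|_F = 0 and δ_{c,m}(t) = c·t^m. Then for every a ∈ F̄(t) \ F̄, the logarithmic derivative δ_{c,m}(a)·a⁻¹ does not lie in F̄. Consequently no nonzero element of F̄ is in the ℚ-span of logarithmic derivatives of (F̄(t), δ_{c,m}). -/

import Mathlib

open Polynomial


private lemma wron18 {F : Type*} [Field F] [CharZero F] {p q : F[X]} {α : F}
    (hp : p ≠ 0) (hq : q ≠ 0) (hroot : p.IsRoot α) (hqα : ¬ q.IsRoot α) :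
    (derivative p * q - p * derivative q) ≠ 0 ∧
      rootMultiplicity α (derivative p * q - p * derivative q)
        = rootMultiplicity α p - 1 := by
  set e := rootMultiplicity α p with he_def
  have he : 1 ≤ e := (rootMultiplicity_pos hp).mpr hroot
  have hd0 : derivative p ≠ 0 := by
    intro h
    obtain ⟨x, hx⟩ := natDegree_eq_zero.mp (natDegree_eq_zero_of_derivative_eq_zero h)
    rw [← hx] at hroot hp
    simp [IsRoot] at hroot
    exact hp (by rw [hroot]; simp)
  have hrm_d : rootMultiplicity α (derivative p) = e - 1 :=
    derivative_rootMultiplicity_of_root hroot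
  have h1 : ((X - C α) ^ (e - 1) : F[X]) ∣ derivative p * q := by
    refine Dvd.dvd.mul_right ?_ q
    rw [← hrm_d]; exact pow_rootMultiplicity_dvd _ α
  have h2 : ((X - C α) ^ e : F[X]) ∣ p * derivative q :=
    Dvd.dvd.mul_right (pow_rootMultiplicity_dvd p α) _
  have h3 : ¬ ((X - C α) ^ e : F[X]) ∣ derivative p * q := by
    intro h
    have hle : e ≤ rootMultiplicity α (derivative p * q) :=
      (le_rootMultiplicity_iff (mul_ne_zero hd0 hq)).mpr h
    rw [rootMultiplicity_mul (mul_ne_zero hd0 hq), hrm_d,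
      rootMultiplicity_eq_zero hqα] at hle
    omega
  have hW0 : (derivative p * q - p * derivative q) ≠ 0 := by
    intro h
    exact h3 (by rw [sub_eq_zero] at h; rw [h]; exact h2)
  refine ⟨hW0, ?_⟩
  have hWd : ((X - C α) ^ (e - 1) : F[X]) ∣ (derivative p * q - p * derivative q) := by
    refine dvd_sub h1 (Dvd.dvd.mul_right ?_ _)
    exact (pow_dvd_pow _ (Nat.sub_le e 1)).trans (pow_rootMultiplicity_dvd p α)
  have hWnd : ¬ ((X - C α) ^ e : F[X]) ∣ (derivative p * q - p * derivative q) := by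
    intro h
    exact h3 (by have := dvd_add h h2; simpa using this)
  have hlo : e - 1 ≤ rootMultiplicity α (derivative p * q - p * derivative q) :=
    (le_rootMultiplicity_iff hW0).mpr hWd
  have hhi : ¬ e ≤ rootMultiplicity α (derivative p * q - p * derivative q) := by
    intro h
    exact hWnd ((le_rootMultiplicity_iff hW0).mp h)
  omega

private lemma key18 {F : Type*} [Field F] [IsAlgClosed F] [CharZero F] {p q : F[X]}
    (hp : p ≠ 0) (hq : q ≠ 0) (hcop : IsCoprime p q) {β c : F} (hc : c ≠ 0)
    {k n : ℕ} (hkn : (k : ℤ) - n ≠ 1)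
    (heq : C c * X ^ k * (derivative p * q - p * derivative q) = C β * (p * q * X ^ n)) :
    p.natDegree = 0 ∧ q.natDegree = 0 := by
  classical
  by_cases hβ : β = 0
  · subst hβ
    rw [map_zero, zero_mul] at heq
    have hW : derivative p * q = p * derivative q := by
      rcases mul_eq_zero.mp heq with h | h
      · rcases mul_eq_zero.mp h with h' | h'
        · exact absurd h' (by simp [hc])
        · exact absurd h' (pow_ne_zero k X_ne_zero)
      · rwa [sub_eq_zero] at h
    have hpd : p ∣ derivative p := hcop.dvd_of_dvd_mul_right ⟨derivative q, hW⟩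
    have hqd : q ∣ derivative q := by
      refine hcop.symm.dvd_of_dvd_mul_right ⟨derivative p, ?_⟩
      linear_combination -hW
    constructor
    · by_cases hd : derivative p = 0
      · exact natDegree_eq_zero_of_derivative_eq_zero hd
      · exact absurd (degree_le_of_dvd hpd hd) (not_le.mpr (degree_derivative_lt hp))
    · by_cases hd : derivative q = 0
      · exact natDegree_eq_zero_of_derivative_eq_zero hd
      · exact absurd (degree_le_of_dvd hqd hd) (not_le.mpr (degree_derivative_lt hq))
  · have hpq : p * q ≠ 0 := mul_ne_zero hp hq
    have hmain : (p * q).natDegree = 0 := by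
      by_contra hdeg
      obtain ⟨α, hα⟩ := IsAlgClosed.exists_root (p * q) (by
        rw [degree_eq_natDegree hpq]
        exact_mod_cast hdeg)
      have hnotboth : ¬ (p.IsRoot α ∧ q.IsRoot α) := by
        rintro ⟨h1, h2⟩
        obtain ⟨u, v, huv⟩ := hcop
        have := congrArg (eval α) huv
        simp [h1.eq_zero, h2.eq_zero] at this
      have hWdata : (derivative p * q - p * derivative q) ≠ 0 ∧
          rootMultiplicity α (derivative p * q - p * derivative q)
            = rootMultiplicity α p + rootMultiplicity α q - 1 := by
        have hor : p.IsRoot α ∨ q.IsRoot α := by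
          have : eval α p * eval α q = 0 := by simpa [IsRoot] using hα
          rcases mul_eq_zero.mp this with h | h
          · exact Or.inl h
          · exact Or.inr h
        rcases hor with h | h
        · have hq' : ¬ q.IsRoot α := fun h2 => hnotboth ⟨h, h2⟩
          obtain ⟨h1, h2⟩ := wron18 hp hq h hq'
          refine ⟨h1, ?_⟩
          rw [h2, rootMultiplicity_eq_zero hq']; omega
        · have hp' : ¬ p.IsRoot α := fun h2 => hnotboth ⟨h2, h⟩
          obtain ⟨h1, h2⟩ := wron18 hq hp h hp'
          have hWV : derivative p * q - p * derivative q
              = C (-1 : F) * (derivative q * p - q * derivative p) := by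
            rw [map_neg, map_one]; ring
          have hC1 : (C (-1 : F) : F[X]) ≠ 0 := by simp
          constructor
          · rw [hWV]; exact mul_ne_zero hC1 h1
          · rw [hWV, rootMultiplicity_mul (mul_ne_zero hC1 h1), h2,
              rootMultiplicity_eq_zero (by simp [IsRoot] : ¬ (C (-1:F)).IsRoot α),
              rootMultiplicity_eq_zero hp']
            omega
      obtain ⟨hW0, hWrm⟩ := hWdata
      have hCc : rootMultiplicity α (C c) = 0 :=
        rootMultiplicity_eq_zero (by simp [IsRoot, hc])
      have hCβ : rootMultiplicity α (C β) = 0 :=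
        rootMultiplicity_eq_zero (by simp [IsRoot, hβ])
      have hXpow : ∀ j : ℕ, rootMultiplicity α ((X : F[X]) ^ j) = if α = 0 then j else 0 := by
        intro j
        by_cases h0 : α = 0
        · subst h0
          simpa using rootMultiplicity_X_sub_C_pow (0 : F) j
        · simp only [if_neg h0]
          refine rootMultiplicity_eq_zero ?_
          simp only [IsRoot, eval_pow, eval_X]
          exact pow_ne_zero j h0
      have hrml := congrArg (rootMultiplicity α) heq
      have hCc0 : (C c : F[X]) ≠ 0 := by simp [hc]
      have hCβ0 : (C β : F[X]) ≠ 0 := by simp [hβ]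
      have hXk0 : ((X : F[X]) ^ k) ≠ 0 := pow_ne_zero k X_ne_zero
      have hXn0 : ((X : F[X]) ^ n) ≠ 0 := pow_ne_zero n X_ne_zero
      rw [rootMultiplicity_mul (mul_ne_zero (mul_ne_zero hCc0 hXk0) hW0),
        rootMultiplicity_mul (mul_ne_zero hCc0 hXk0),
        rootMultiplicity_mul (mul_ne_zero hCβ0 (mul_ne_zero hpq hXn0)),
        rootMultiplicity_mul (mul_ne_zero hpq hXn0),
        rootMultiplicity_mul hpq,
        hCc, hCβ, hXpow k, hXpow n, hWrm] at hrml
      have hpos : 1 ≤ rootMultiplicity α p + rootMultiplicity α q := by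
        have := (rootMultiplicity_pos hpq).mpr hα
        rw [rootMultiplicity_mul hpq] at this
        omega
      rcases eq_or_ne α 0 with h0 | h0
      · subst h0
        rw [if_pos rfl, if_pos rfl] at hrml
        omega
      · rw [if_neg h0, if_neg h0] at hrml
        omega
    rw [natDegree_mul hp hq] at hmain
    omega


/-- Let `F̄` be algebraically closed of characteristic zero, `K = F̄(t)` with the
derivation `δ_{c,m}` vanishing on `F̄` and `δ_{c,m}(t) = c·t^m`, where `c ≠ 0` and `m ≠ 1` is an
integer. Then for every `a ∈ F̄(t) \ F̄`, the logarithmic derivative `δ_{c,m}(a)/a` does not lie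
in `F̄`; consequently no nonzero element of `F̄` lies in the `ℚ`-span of the logarithmic
derivatives of `(F̄(t), δ_{c,m})`. -/
theorem stmt18 {F : Type*} [Field F] [IsAlgClosed F] [CharZero F]
    (c : F) (hc : c ≠ 0) (m : ℤ) (hm : m ≠ 1)
    (δ : RatFunc F → RatFunc F)
    (hadd : ∀ x y : RatFunc F, δ (x + y) = δ x + δ y)
    (hmul : ∀ x y : RatFunc F, δ (x * y) = δ x * y + x * δ y)
    (hF : ∀ a : F, δ (algebraMap F (RatFunc F) a) = 0)
    (ht : δ RatFunc.X = algebraMap F (RatFunc F) c * RatFunc.X ^ m) :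
    (∀ a : RatFunc F, a ∉ Set.range (algebraMap F (RatFunc F)) →
        δ a / a ∉ Set.range (algebraMap F (RatFunc F))) ∧
      (∀ x : F, x ≠ 0 →
        algebraMap F (RatFunc F) x ∉
          Submodule.span ℚ {y : RatFunc F | ∃ b : RatFunc F, b ≠ 0 ∧ y = δ b / b}) := by
  classical
  set A := algebraMap F[X] (RatFunc F) with hA
  set φ := algebraMap F (RatFunc F) with hφdef
  set D : RatFunc F := φ c * RatFunc.X ^ m with hD
  have hAinj : Function.Injective A := RatFunc.algebraMap_injective F
  have hφA : ∀ b : F, φ b = A (C b) := by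
    intro b
    rw [hφdef, IsScalarTower.algebraMap_apply F F[X] (RatFunc F), Polynomial.algebraMap_eq]
  have hδ0 : δ 0 = 0 := by
    have h := hadd 0 0
    rw [add_zero] at h
    exact (add_eq_left.mp h.symm)
  have hδ1 : δ 1 = 0 := by
    have h := hmul 1 1
    rw [mul_one, one_mul, mul_one] at h
    exact (add_eq_left.mp h.symm)
  -- δ on polynomials
  have hP : ∀ p : F[X], δ (A p) = A (derivative p) * D := by
    intro p
    refine Polynomial.induction_on p ?_ ?_ ?_
    · intro a
      rw [← hφA a, hF a, derivative_C, map_zero, zero_mul]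
    · intro f g hf hg
      rw [map_add, hadd, hf, hg, derivative_add, map_add, add_mul]
    · intro nn a ih
      have hrw : (C a * X ^ (nn + 1) : F[X]) = (C a * X ^ nn) * X := by ring
      rw [hrw, map_mul, hmul, ih, RatFunc.algebraMap_X, ht]
      have hdrw : derivative ((C a * X ^ nn) * X) = derivative (C a * X ^ nn) * X
          + C a * X ^ nn := by
        rw [derivative_mul, derivative_X, mul_one]
      rw [hdrw, map_add, map_mul A (derivative (C a * X ^ nn)) X, RatFunc.algebraMap_X]
      ring
  -- the main statement, part 1
  have part1 : ∀ a : RatFunc F, a ∉ Set.range φ → δ a / a ∉ Set.range φ := by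
    intro a ha hmem
    obtain ⟨β, hβ⟩ := hmem
    have ha0 : a ≠ 0 := fun h => ha ⟨0, by simp [h]⟩
    have hδa : δ a = φ β * a := by
      rw [hβ, div_mul_cancel₀ _ ha0]
    have hq0 : A a.denom ≠ 0 := fun h => RatFunc.denom_ne_zero a (hAinj (by simpa using h))
    have haq : a * A a.denom = A a.num :=
      ((div_eq_iff hq0).mp (RatFunc.num_div_denom a)).symm
    have h1 : δ a * A a.denom + a * δ (A a.denom) = A (derivative a.num) * D := by
      rw [← hmul, haq, hP]
    rw [hP] at h1
    -- multiply out
    have heq2 : φ β * A a.num * A a.denom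
        = (A (derivative a.num) * A a.denom - A a.num * A (derivative a.denom)) * D := by
      linear_combination (A a.denom) * h1 - (A a.denom) * (A a.denom) * hδa
        - (φ β * A a.denom + A (derivative a.denom) * D) * haq
    set n : ℕ := (-m).toNat with hn
    set k : ℕ := (m + n).toNat with hk
    have hkn : (k : ℤ) - (n : ℤ) ≠ 1 := by omega
    have hXne : (RatFunc.X : RatFunc F) ≠ 0 := RatFunc.X_ne_zero
    have hmnk : m + (n : ℤ) = (k : ℤ) := by omega
    have hDX : D * RatFunc.X ^ (n : ℕ) = φ c * RatFunc.X ^ (k : ℕ) := by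
      rw [hD, mul_assoc, ← zpow_natCast (RatFunc.X : RatFunc F) n,
        ← zpow_add₀ hXne, hmnk, zpow_natCast]
    have heq3 : A (C β * (a.num * a.denom * X ^ n))
        = A (C c * X ^ k * (derivative a.num * a.denom - a.num * derivative a.denom)) := by
      rw [map_mul, map_mul, map_mul, map_mul, map_mul, map_sub, map_mul, map_mul,
        map_pow, map_pow, RatFunc.algebraMap_X, ← hφA, ← hφA]
      linear_combination (RatFunc.X ^ (n : ℕ)) * heq2
        + (A (derivative a.num) * A a.denom - A a.num * A (derivative a.denom)) * hDX
    have hpoly := hAinj heq3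
    obtain ⟨hdp, hdq⟩ := key18 (RatFunc.num_ne_zero ha0) (RatFunc.denom_ne_zero a)
      (RatFunc.isCoprime_num_denom a) hc hkn hpoly.symm
    obtain ⟨x, hx⟩ := natDegree_eq_zero.mp hdp
    obtain ⟨y, hy⟩ := natDegree_eq_zero.mp hdq
    have hy1 : y = 1 := by
      have := RatFunc.monic_denom a
      rw [← hy] at this
      simpa [Polynomial.Monic, leadingCoeff] using this
    apply ha
    refine ⟨x, ?_⟩
    rw [← RatFunc.num_div_denom a, ← hy, hy1, map_one, map_one, div_one, hφA, hx]
  refine ⟨part1, ?_⟩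
  -- logarithmic derivative lemmas
  have hL1 : ∀ x y : RatFunc F, x ≠ 0 → y ≠ 0 →
      δ (x * y) / (x * y) = δ x / x + δ y / y := by
    intro x y hx hy
    rw [hmul]
    field_simp
  have hLpow : ∀ (x : RatFunc F), x ≠ 0 → ∀ j : ℕ,
      δ (x ^ j) / (x ^ j) = (j : RatFunc F) * (δ x / x) := by
    intro x hx j
    induction j with
    | zero => simp [hδ1]
    | succ i ih =>
      rw [pow_succ, hL1 _ _ (pow_ne_zero i hx) hx, ih]
      push_cast
      ring
  have hLinv : ∀ x : RatFunc F, x ≠ 0 → δ x⁻¹ / x⁻¹ = -(δ x / x) := by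
    intro x hx
    have h := hL1 x x⁻¹ hx (inv_ne_zero hx)
    rw [mul_inv_cancel₀ hx, hδ1, zero_div] at h
    linear_combination -h
  have hLzpow : ∀ (x : RatFunc F), x ≠ 0 → ∀ z : ℤ,
      δ (x ^ z) / (x ^ z) = (z : RatFunc F) * (δ x / x) := by
    intro x hx z
    cases z with
    | ofNat j =>
      rw [Int.ofNat_eq_coe, zpow_natCast, hLpow x hx j]
      push_cast
      ring
    | negSucc j =>
      rw [zpow_negSucc, hLinv _ (pow_ne_zero _ hx), hLpow x hx (j + 1)]
      rw [Int.cast_negSucc]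
      push_cast
      ring
  -- the submodule of elements some positive multiple of which is a log derivative
  set T : Submodule ℚ (RatFunc F) :=
    { carrier := {v | ∃ (N : ℕ) (b : RatFunc F), 0 < N ∧ b ≠ 0 ∧
        (N : RatFunc F) * v = δ b / b}
      add_mem' := by
        rintro v w ⟨N₁, b₁, hN₁, hb₁, hv₁⟩ ⟨N₂, b₂, hN₂, hb₂, hv₂⟩
        refine ⟨N₁ * N₂, b₁ ^ N₂ * b₂ ^ N₁, Nat.mul_pos hN₁ hN₂,
          mul_ne_zero (pow_ne_zero _ hb₁) (pow_ne_zero _ hb₂), ?_⟩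
        rw [hL1 _ _ (pow_ne_zero _ hb₁) (pow_ne_zero _ hb₂), hLpow _ hb₁, hLpow _ hb₂,
          ← hv₁, ← hv₂]
        push_cast
        ring
      zero_mem' := ⟨1, 1, Nat.one_pos, one_ne_zero, by simp [hδ1]⟩
      smul_mem' := by
        rintro q v ⟨N, b, hN, hb, hv⟩
        refine ⟨N * q.den, b ^ q.num, Nat.mul_pos hN q.pos, zpow_ne_zero _ hb, ?_⟩
        rw [hLzpow _ hb q.num, ← hv]
        have hqd : ((q.den : ℚ) * q : ℚ) = (q.num : ℚ) := by
          rw [mul_comm]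
          exact Rat.mul_den_eq_num q
        have e : ∀ (r : ℚ) (w : RatFunc F), r • w = (r : RatFunc F) * w := fun r w => by
          rw [@Algebra.smul_def ℚ (RatFunc F) _ _ (RatFunc.instAlgebraOfPolynomial F ℚ) r w]
          congr 1
          exact map_ratCast (@algebraMap ℚ (RatFunc F) _ _ (RatFunc.instAlgebraOfPolynomial F ℚ)) r
        have h1 : ((q.den : ℚ)) • (q • v) = ((q.num : ℚ)) • v := by
          simp only [e]; rw [← mul_assoc, ← hqd]; push_cast; ring
        simp only [e, Rat.smul_def] at h1 ⊢
        push_cast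
        push_cast at h1
        linear_combination ((N : RatFunc F)) * h1
      } with hT
  intro x hx hmem
  have hTmem : φ x ∈ T := by
    refine Submodule.span_le.mpr ?_ hmem
    rintro v ⟨b, hb, rfl⟩
    exact ⟨1, b, Nat.one_pos, hb, by simp⟩
  obtain ⟨N, b, hN, hb, hv⟩ := hTmem
  have hNx : δ b / b = φ ((N : F) * x) := by
    rw [← hv, map_mul, map_natCast]
  have hNx0 : (N : F) * x ≠ 0 :=
    mul_ne_zero (Nat.cast_ne_zero.mpr hN.ne') hx
  by_cases hbr : b ∈ Set.range φ
  · obtain ⟨y, rfl⟩ := hbr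
    rw [hφdef] at hNx
    rw [hF y] at hNx
    have : ((N : F) * x) = 0 := by
      have hinj : Function.Injective φ := (algebraMap F (RatFunc F)).injective
      apply hinj
      rw [← hNx, map_zero, zero_div]
    exact hNx0 this
  · exact part1 b hbr ⟨(N : F) * x, hNx.symm⟩
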